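/- Let G be a non-commutative directed po-group. The following are equivalent: (i) the right wreath product ℤ ⃗wr G satisfies RDP₁; (ii) the left wreath product ℤ ⃖wr G satisfies RDP₁; (iii) G is linearly ordered. In any such case, the right and left wreath products are linearly ordered groups. -/

import Mathlib

/-! Riesz decomposition properties relative to explicit multiplication `mul`,
unit `one`, and order relation `le`, together with the lexicographic product
order and (unrestricted/restricted, right/left) wreath products of po-groups. -/

/-- The Riesz decomposition property (RDP). -/
def RDPWith {M : Type*} (mul : M → M → M) (one : M) (le : M → M → Prop) : Prop :=
  ∀ a₁ a₂ b₁ b₂ : M,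
    le one a₁ → le one a₂ → le one b₁ → le one b₂ → mul a₁ a₂ = mul b₁ b₂ →
    ∃ c₁₁ c₁₂ c₂₁ c₂₂ : M,
      le one c₁₁ ∧ le one c₁₂ ∧ le one c₂₁ ∧ le one c₂₂ ∧
      a₁ = mul c₁₁ c₁₂ ∧ a₂ = mul c₂₁ c₂₂ ∧ b₁ = mul c₁₁ c₂₁ ∧ b₂ = mul c₁₂ c₂₂

/-- The Riesz decomposition property RDP₁ (commutativity below the
cross-diagonal entries `c₁₂`, `c₂₁`). -/
def RDP1With {M : Type*} (mul : M → M → M) (one : M) (le : M → M → Prop) : Prop :=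
  ∀ a₁ a₂ b₁ b₂ : M,
    le one a₁ → le one a₂ → le one b₁ → le one b₂ → mul a₁ a₂ = mul b₁ b₂ →
    ∃ c₁₁ c₁₂ c₂₁ c₂₂ : M,
      le one c₁₁ ∧ le one c₁₂ ∧ le one c₂₁ ∧ le one c₂₂ ∧
      a₁ = mul c₁₁ c₁₂ ∧ a₂ = mul c₂₁ c₂₂ ∧ b₁ = mul c₁₁ c₂₁ ∧ b₂ = mul c₁₂ c₂₂ ∧
      (∀ x y : M, le one x → le x c₁₂ → le one y → le y c₂₁ → mul x y = mul y x)

/-- The Riesz decomposition property RDP₂ (the infimum of `c₁₂` and `c₂₁`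
exists and equals `one`; the last clause, together with `le one c₁₂` and
`le one c₂₁`, says exactly that `one` is the greatest lower bound). -/
def RDP2With {M : Type*} (mul : M → M → M) (one : M) (le : M → M → Prop) : Prop :=
  ∀ a₁ a₂ b₁ b₂ : M,
    le one a₁ → le one a₂ → le one b₁ → le one b₂ → mul a₁ a₂ = mul b₁ b₂ →
    ∃ c₁₁ c₁₂ c₂₁ c₂₂ : M,
      le one c₁₁ ∧ le one c₁₂ ∧ le one c₂₁ ∧ le one c₂₂ ∧
      a₁ = mul c₁₁ c₁₂ ∧ a₂ = mul c₂₁ c₂₂ ∧ b₁ = mul c₁₁ c₂₁ ∧ b₂ = mul c₁₂ c₂₂ ∧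
      (∀ z : M, le z c₁₂ → le z c₂₁ → le z one)

/-- RDP for the sub-po-group carried by the subset `S`. -/
def RDPWithOn {M : Type*} (S : Set M) (mul : M → M → M) (one : M)
    (le : M → M → Prop) : Prop :=
  ∀ a₁ a₂ b₁ b₂ : M, a₁ ∈ S → a₂ ∈ S → b₁ ∈ S → b₂ ∈ S →
    le one a₁ → le one a₂ → le one b₁ → le one b₂ → mul a₁ a₂ = mul b₁ b₂ →
    ∃ c₁₁ c₁₂ c₂₁ c₂₂ : M, c₁₁ ∈ S ∧ c₁₂ ∈ S ∧ c₂₁ ∈ S ∧ c₂₂ ∈ S ∧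
      le one c₁₁ ∧ le one c₁₂ ∧ le one c₂₁ ∧ le one c₂₂ ∧
      a₁ = mul c₁₁ c₁₂ ∧ a₂ = mul c₂₁ c₂₂ ∧ b₁ = mul c₁₁ c₂₁ ∧ b₂ = mul c₁₂ c₂₂

/-- RDP₁ for the sub-po-group carried by the subset `S`. -/
def RDP1WithOn {M : Type*} (S : Set M) (mul : M → M → M) (one : M)
    (le : M → M → Prop) : Prop :=
  ∀ a₁ a₂ b₁ b₂ : M, a₁ ∈ S → a₂ ∈ S → b₁ ∈ S → b₂ ∈ S →
    le one a₁ → le one a₂ → le one b₁ → le one b₂ → mul a₁ a₂ = mul b₁ b₂ →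
    ∃ c₁₁ c₁₂ c₂₁ c₂₂ : M, c₁₁ ∈ S ∧ c₁₂ ∈ S ∧ c₂₁ ∈ S ∧ c₂₂ ∈ S ∧
      le one c₁₁ ∧ le one c₁₂ ∧ le one c₂₁ ∧ le one c₂₂ ∧
      a₁ = mul c₁₁ c₁₂ ∧ a₂ = mul c₂₁ c₂₂ ∧ b₁ = mul c₁₁ c₂₁ ∧ b₂ = mul c₁₂ c₂₂ ∧
      (∀ x y : M, x ∈ S → y ∈ S →
        le one x → le x c₁₂ → le one y → le y c₂₁ → mul x y = mul y x)

/-- RDP₂ for the sub-po-group carried by the subset `S`. -/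
def RDP2WithOn {M : Type*} (S : Set M) (mul : M → M → M) (one : M)
    (le : M → M → Prop) : Prop :=
  ∀ a₁ a₂ b₁ b₂ : M, a₁ ∈ S → a₂ ∈ S → b₁ ∈ S → b₂ ∈ S →
    le one a₁ → le one a₂ → le one b₁ → le one b₂ → mul a₁ a₂ = mul b₁ b₂ →
    ∃ c₁₁ c₁₂ c₂₁ c₂₂ : M, c₁₁ ∈ S ∧ c₁₂ ∈ S ∧ c₂₁ ∈ S ∧ c₂₂ ∈ S ∧
      le one c₁₁ ∧ le one c₁₂ ∧ le one c₂₁ ∧ le one c₂₂ ∧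
      a₁ = mul c₁₁ c₁₂ ∧ a₂ = mul c₂₁ c₂₂ ∧ b₁ = mul c₁₁ c₂₁ ∧ b₂ = mul c₁₂ c₂₂ ∧
      (∀ z : M, z ∈ S → le z c₁₂ → le z c₂₁ → le z one)

/-- The Riesz interpolation property (RIP). -/
def RIPWith {M : Type*} (le : M → M → Prop) : Prop :=
  ∀ a₁ a₂ b₁ b₂ : M, le a₁ b₁ → le a₁ b₂ → le a₂ b₁ → le a₂ b₂ →
    ∃ c : M, le a₁ c ∧ le a₂ c ∧ le c b₁ ∧ le c b₂

/-- RIP for the subposet carried by the subset `S`. -/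
def RIPWithOn {M : Type*} (S : Set M) (le : M → M → Prop) : Prop :=
  ∀ a₁ a₂ b₁ b₂ : M, a₁ ∈ S → a₂ ∈ S → b₁ ∈ S → b₂ ∈ S →
    le a₁ b₁ → le a₁ b₂ → le a₂ b₁ → le a₂ b₂ →
    ∃ c ∈ S, le a₁ c ∧ le a₂ c ∧ le c b₁ ∧ le c b₂

/-- The lexicographic order on a product: `(g₁,h₁) ≤ (g₂,h₂)` iff `g₁ < g₂`,
or `g₁ = g₂` and `h₁ ≤ h₂`. -/
def lexLE {A B : Type*} [PartialOrder A] [LE B] (p q : A × B) : Prop :=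
  p.1 < q.1 ∨ (p.1 = q.1 ∧ p.2 ≤ q.2)

/-- A poset is an antilattice if only comparable pairs of elements have a
join or a meet. -/
def IsAntilattice (G : Type*) [PartialOrder G] : Prop :=
  ∀ a b : G, ((∃ s, IsLUB {a, b} s) ∨ (∃ s, IsGLB {a, b} s)) → a ≤ b ∨ b ≤ a

/-- Multiplication of the unrestricted Wreath product `A Wr G`:
`(n,⟨g_a⟩)·(m,⟨h_a⟩) = (n·m, ⟨g_a·h_{a·n}⟩)`. -/
def wrMul {A G : Type*} [Mul A] [Mul G] (p q : A × (A → G)) : A × (A → G) :=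
  (p.1 * q.1, fun a => p.2 a * q.2 (a * p.1))

/-- The unit of the Wreath product `A Wr G`. -/
def wrOne (A G : Type*) [One A] [One G] : A × (A → G) :=
  (1, fun _ => 1)

/-- The order of the Wreath product `A Wr G`: `(n,⟨g_a⟩) ≤ (m,⟨h_a⟩)` iff
`n < m`, or `n = m` and `g_a ≤ h_a` for all `a`. -/
def wrLE {A G : Type*} [PartialOrder A] [LE G] (p q : A × (A → G)) : Prop :=
  p.1 < q.1 ∨ (p.1 = q.1 ∧ ∀ a, p.2 a ≤ q.2 a)

/-- The carrier of the restricted Wreath product `A wr G`: elements whose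
second component equals `1` at all but finitely many places. -/
def wrS (A G : Type*) [One G] : Set (A × (A → G)) :=
  {p | (Function.mulSupport p.2).Finite}

/-- Multiplication of the wreath products over `ℤ`:
`(n,⟨g_i⟩)·(m,⟨h_i⟩) = (n+m, ⟨g_i·h_{i+n}⟩)`. -/
def zwrMul {G : Type*} [Mul G] (p q : ℤ × (ℤ → G)) : ℤ × (ℤ → G) :=
  (p.1 + q.1, fun i => p.2 i * q.2 (i + p.1))

/-- The unit of the wreath products over `ℤ`. -/
def zwrOne (G : Type*) [One G] : ℤ × (ℤ → G) :=
  (0, fun _ => 1)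

/-- The inverse in the wreath products over `ℤ`. -/
def zwrInv {G : Type*} [Inv G] (p : ℤ × (ℤ → G)) : ℤ × (ℤ → G) :=
  (-p.1, fun i => (p.2 (i - p.1))⁻¹)

/-- The carrier of the (restricted) wreath products over `ℤ`: elements with
`g_i = 1` for all but finitely many `i`. -/
def zwrS (G : Type*) [One G] : Set (ℤ × (ℤ → G)) :=
  {p | (Function.mulSupport p.2).Finite}

/-- Strict positivity in the right wreath product `ℤ →wr G`: either `n > 0`,
or `n = 0`, some `g_i ≠ 1`, and `g_j > 1` where `j` is the greatest index `i`
with `g_i ≠ 1`. -/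
def rPos {G : Type*} [One G] [LT G] (p : ℤ × (ℤ → G)) : Prop :=
  0 < p.1 ∨ (p.1 = 0 ∧ ∃ j : ℤ, 1 < p.2 j ∧ ∀ i : ℤ, j < i → p.2 i = 1)

/-- Strict positivity in the left wreath product `ℤ ←wr G`: either `n > 0`,
or `n = 0`, some `g_i ≠ 1`, and `g_j > 1` where `j` is the least index `i`
with `g_i ≠ 1`. -/
def lPos {G : Type*} [One G] [LT G] (p : ℤ × (ℤ → G)) : Prop :=
  0 < p.1 ∨ (p.1 = 0 ∧ ∃ j : ℤ, 1 < p.2 j ∧ ∀ i : ℤ, i < j → p.2 i = 1)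

/-- The order of the right wreath product `ℤ →wr G`. -/
def rLE {G : Type*} [Group G] [LT G] (p q : ℤ × (ℤ → G)) : Prop :=
  p = q ∨ rPos (zwrMul (zwrInv p) q)

/-- The order of the left wreath product `ℤ ←wr G`. -/
def lLE {G : Type*} [Group G] [LT G] (p q : ℤ × (ℤ → G)) : Prop :=
  p = q ∨ lPos (zwrMul (zwrInv p) q)

section ZwrAlgebra

variable {G : Type*} [Group G]

theorem zwr_assoc (p q r : ℤ × (ℤ → G)) :
    zwrMul (zwrMul p q) r = zwrMul p (zwrMul q r) := by
  unfold zwrMul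
  refine Prod.ext (by dsimp; exact add_assoc _ _ _) ?_
  funext i
  dsimp
  rw [mul_assoc, add_assoc]

theorem zwr_one_mul (p : ℤ × (ℤ → G)) : zwrMul (zwrOne G) p = p := by
  unfold zwrMul zwrOne
  refine Prod.ext (by simp) ?_
  funext i; simp

theorem zwr_mul_one (p : ℤ × (ℤ → G)) : zwrMul p (zwrOne G) = p := by
  unfold zwrMul zwrOne
  refine Prod.ext (by simp) ?_
  funext i; simp

theorem zwr_inv_mul (p : ℤ × (ℤ → G)) : zwrMul (zwrInv p) p = zwrOne G := by
  unfold zwrMul zwrInv zwrOne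
  refine Prod.ext (by simp) ?_
  funext i; simp [sub_eq_add_neg]

theorem zwr_mul_inv (p : ℤ × (ℤ → G)) : zwrMul p (zwrInv p) = zwrOne G := by
  unfold zwrMul zwrInv zwrOne
  refine Prod.ext (by simp) ?_
  funext i; simp

theorem zwr_inv_one : zwrInv (zwrOne G) = zwrOne G := by
  unfold zwrInv zwrOne
  refine Prod.ext (by simp) ?_
  funext i; simp

theorem zwrS_one_mem : zwrOne G ∈ zwrS G := by
  have : Function.mulSupport (zwrOne G).2 ⊆ (∅ : Set ℤ) := by
    intro i hi
    simp [zwrOne, Function.mem_mulSupport] at hi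
  exact Set.Finite.subset (Set.finite_empty) this

theorem zwrS_mul_mem {p q : ℤ × (ℤ → G)} (hp : p ∈ zwrS G) (hq : q ∈ zwrS G) :
    zwrMul p q ∈ zwrS G := by
  have hinj : Set.InjOn (fun i : ℤ => i + p.1)
      ((fun i : ℤ => i + p.1) ⁻¹' Function.mulSupport q.2) := by
    intro a _ b _ hab
    simpa using hab
  refine Set.Finite.subset (Set.Finite.union hp (Set.Finite.preimage hinj hq)) ?_
  intro i hi
  simp only [zwrMul, Function.mem_mulSupport] at hi
  by_contra hc
  simp only [Set.mem_union, Set.mem_preimage, Function.mem_mulSupport, not_or, not_not] at hc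
  rw [hc.1, hc.2, mul_one] at hi
  exact hi rfl

theorem zwrS_inv_mem {p : ℤ × (ℤ → G)} (hp : p ∈ zwrS G) : zwrInv p ∈ zwrS G := by
  have hinj : Set.InjOn (fun i : ℤ => i - p.1)
      ((fun i : ℤ => i - p.1) ⁻¹' Function.mulSupport p.2) := by
    intro a _ b _ hab
    simpa using hab
  refine Set.Finite.subset (Set.Finite.preimage hinj hp) ?_
  intro i hi
  simp only [zwrInv, Function.mem_mulSupport] at hi
  simp only [Set.mem_preimage, Function.mem_mulSupport]
  intro hc
  rw [hc] at hi
  simp at hi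

end ZwrAlgebra

/-- Order on the wreath product defined from a strict positivity predicate. -/
def posLE {G : Type*} [Group G] (pos : ℤ × (ℤ → G) → Prop)
    (p q : ℤ × (ℤ → G)) : Prop :=
  p = q ∨ pos (zwrMul (zwrInv p) q)

section PosAbstract

variable {G : Type*} [Group G] (pos : ℤ × (ℤ → G) → Prop)

theorem pos_one_le_iff (p : ℤ × (ℤ → G)) :
    posLE pos (zwrOne G) p ↔ (p = zwrOne G ∨ pos p) := by
  unfold posLE
  rw [zwr_inv_one, zwr_one_mul]
  constructor
  · rintro (h | h)
    · exact Or.inl h.symm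
    · exact Or.inr h
  · rintro (h | h)
    · exact Or.inl h.symm
    · exact Or.inr h

theorem pos_le_one_iff (p : ℤ × (ℤ → G)) :
    posLE pos p (zwrOne G) ↔ (p = zwrOne G ∨ pos (zwrInv p)) := by
  unfold posLE
  rw [zwr_mul_one]

theorem pos_antisymm (Hasym : ∀ p : ℤ × (ℤ → G), pos p → pos (zwrInv p) → False)
    {p : ℤ × (ℤ → G)} (h1 : posLE pos (zwrOne G) p) (h2 : posLE pos p (zwrOne G)) :
    p = zwrOne G := by
  rcases (pos_one_le_iff pos p).mp h1 with h | h
  · exact h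
  rcases (pos_le_one_iff pos p).mp h2 with h' | h'
  · exact h'
  exact (Hasym p h h').elim

end PosAbstract

section PosTotal

variable {G : Type*} [Group G] [PartialOrder G]
  [CovariantClass G G (· * ·) (· ≤ ·)] [CovariantClass G G (Function.swap (· * ·)) (· ≤ ·)]

set_option linter.unusedSectionVars false in
theorem pos_le_total (pos : ℤ × (ℤ → G) → Prop) (side : ℤ → ℤ → Prop)
    (Hpos1 : ∀ p : ℤ × (ℤ → G), 0 < p.1 → pos p)
    (Hz : ∀ p : ℤ × (ℤ → G), p.1 = 0 →
      (pos p ↔ ∃ j, 1 < p.2 j ∧ ∀ i, side j i → p.2 i = 1))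
    (Hext : ∀ S : Set ℤ, S.Finite → S.Nonempty → ∃ j ∈ S, ∀ i, side j i → i ∉ S)
    (hlin : ∀ a b : G, a ≤ b ∨ b ≤ a) :
    ∀ p ∈ zwrS G, ∀ q ∈ zwrS G, posLE pos p q ∨ posLE pos q p := by
  intro p hp q hq
  rcases lt_trichotomy p.1 q.1 with h | h | h
  · exact Or.inl (Or.inr (Hpos1 _ (by simp only [zwrMul, zwrInv]; omega)))
  · by_cases hpq : p = q
    · exact Or.inl (Or.inl hpq)
    set r2 : ℤ → G := fun i => (p.2 (i - p.1))⁻¹ * q.2 (i - p.1) with hr2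
    have hval : ∀ i, (zwrMul (zwrInv p) q).2 i = r2 i := by
      intro i
      simp only [zwrMul, zwrInv, hr2, sub_eq_add_neg]
    have hfin : (Function.mulSupport r2).Finite := by
      have hinj : Set.InjOn (fun i : ℤ => i - p.1)
          ((fun i : ℤ => i - p.1) ⁻¹' (Function.mulSupport p.2 ∪ Function.mulSupport q.2)) := by
        intro a _ b _ hab
        simpa using hab
      refine Set.Finite.subset (Set.Finite.preimage hinj (Set.Finite.union hp hq)) ?_
      intro i hi
      simp only [Function.mem_mulSupport, hr2] at hi
      simp only [Set.mem_preimage, Set.mem_union, Function.mem_mulSupport]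
      by_contra hc
      push_neg at hc
      rw [hc.1, hc.2, inv_one, one_mul] at hi
      exact hi rfl
    have hne : (Function.mulSupport r2).Nonempty := by
      by_contra hc
      rw [Set.not_nonempty_iff_eq_empty, Function.mulSupport_eq_empty_iff] at hc
      apply hpq
      have h2 : p.2 = q.2 := by
        funext j
        have := congrFun hc (j + p.1)
        simp only [hr2, add_sub_cancel_right, Pi.one_apply] at this
        have := congrArg (fun z => p.2 j * z) this
        simpa [mul_inv_cancel_left] using this.symm
      exact Prod.ext h h2
    obtain ⟨j, hjS, hjext⟩ := Hext _ hfin hne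
    have hj1 : r2 j ≠ 1 := hjS
    have htail : ∀ i, side j i → r2 i = 1 := by
      intro i hi
      have := hjext i hi
      simpa [Function.mem_mulSupport, not_not] using this
    rcases hlin 1 (r2 j) with hle | hle
    · refine Or.inl (Or.inr ((Hz _ (by simp only [zwrMul, zwrInv]; omega)).mpr ?_))
      exact ⟨j, by rw [hval]; exact lt_of_le_of_ne hle (Ne.symm hj1),
        fun i hi => by rw [hval]; exact htail i hi⟩
    · refine Or.inr (Or.inr ((Hz _ (by simp only [zwrMul, zwrInv]; omega)).mpr ?_))
      have hval' : ∀ i, (zwrMul (zwrInv q) p).2 i = (r2 i)⁻¹ := by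
        intro i
        simp only [zwrMul, zwrInv, hr2, sub_eq_add_neg, mul_inv_rev, inv_inv, ← h]
      refine ⟨j, ?_, fun i hi => by rw [hval', htail i hi, inv_one]⟩
      rw [hval']
      have hlt : r2 j < 1 := lt_of_le_of_ne hle hj1
      have := mul_lt_mul_right hlt (r2 j)⁻¹
      rwa [inv_mul_cancel, mul_one] at this
  · exact Or.inr (Or.inr (Hpos1 _ (by simp only [zwrMul, zwrInv]; omega)))

end PosTotal

section PosRDP1

variable {G : Type*} [Group G] [PartialOrder G]
  [CovariantClass G G (· * ·) (· ≤ ·)] [CovariantClass G G (Function.swap (· * ·)) (· ≤ ·)]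

set_option linter.unusedSectionVars false

theorem pos_rdp1_of_lin (pos : ℤ × (ℤ → G) → Prop) (side : ℤ → ℤ → Prop)
    (Hpos1 : ∀ p : ℤ × (ℤ → G), 0 < p.1 → pos p)
    (Hasym : ∀ p : ℤ × (ℤ → G), pos p → pos (zwrInv p) → False)
    (Hz : ∀ p : ℤ × (ℤ → G), p.1 = 0 →
      (pos p ↔ ∃ j, 1 < p.2 j ∧ ∀ i, side j i → p.2 i = 1))
    (Hext : ∀ S : Set ℤ, S.Finite → S.Nonempty → ∃ j ∈ S, ∀ i, side j i → i ∉ S)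
    (hlin : ∀ a b : G, a ≤ b ∨ b ≤ a) :
    RDP1WithOn (zwrS G) (fun p q : ℤ × (ℤ → G) => zwrMul p q) (zwrOne G) (posLE pos) := by
  intro a1 a2 b1 b2 ha1 ha2 hb1 hb2 pa1 pa2 pb1 pb2 heq0
  have heq : zwrMul a1 a2 = zwrMul b1 b2 := heq0
  rcases pos_le_total pos side Hpos1 Hz Hext hlin a1 ha1 b1 hb1 with h | h
  · refine ⟨a1, zwrOne G, zwrMul (zwrInv a1) b1, b2, ha1, zwrS_one_mem,
      zwrS_mul_mem (zwrS_inv_mem ha1) hb1, hb2,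
      pa1, Or.inl rfl, ?_, pb2, (zwr_mul_one a1).symm, ?_, ?_, (zwr_one_mul b2).symm, ?_⟩
    · rcases h with h | h
      · refine (pos_one_le_iff pos _).mpr (Or.inl ?_)
        rw [← h, zwr_inv_mul]
      · exact (pos_one_le_iff pos _).mpr (Or.inr h)
    · show a2 = zwrMul (zwrMul (zwrInv a1) b1) b2
      rw [zwr_assoc, ← heq, ← zwr_assoc, zwr_inv_mul, zwr_one_mul]
    · show b1 = zwrMul a1 (zwrMul (zwrInv a1) b1)
      rw [← zwr_assoc, zwr_mul_inv, zwr_one_mul]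
    · intro x y _ _ h1x hxc _ _
      have hx1 : x = zwrOne G := pos_antisymm pos Hasym h1x hxc
      show zwrMul x y = zwrMul y x
      rw [hx1, zwr_one_mul, zwr_mul_one]
  · refine ⟨b1, zwrMul (zwrInv b1) a1, zwrOne G, a2, hb1,
      zwrS_mul_mem (zwrS_inv_mem hb1) ha1, zwrS_one_mem, ha2,
      pb1, ?_, Or.inl rfl, pa2, ?_, (zwr_one_mul a2).symm, (zwr_mul_one b1).symm, ?_, ?_⟩
    · rcases h with h | h
      · refine (pos_one_le_iff pos _).mpr (Or.inl ?_)
        rw [h, zwr_inv_mul]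
      · exact (pos_one_le_iff pos _).mpr (Or.inr h)
    · show a1 = zwrMul b1 (zwrMul (zwrInv b1) a1)
      rw [← zwr_assoc, zwr_mul_inv, zwr_one_mul]
    · show b2 = zwrMul (zwrMul (zwrInv b1) a1) a2
      rw [zwr_assoc, heq, ← zwr_assoc, zwr_inv_mul, zwr_one_mul]
    · intro x y _ _ _ _ h1y hyc
      have hy1 : y = zwrOne G := pos_antisymm pos Hasym h1y hyc
      show zwrMul x y = zwrMul y x
      rw [hy1, zwr_one_mul, zwr_mul_one]

end PosRDP1

section PosLin

variable {G : Type*} [Group G] [PartialOrder G]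
  [CovariantClass G G (· * ·) (· ≤ ·)] [CovariantClass G G (Function.swap (· * ·)) (· ≤ ·)]

set_option linter.unusedSectionVars false
set_option maxHeartbeats 1000000

theorem pos_lin_of_rdp1 (pos : ℤ × (ℤ → G) → Prop) (side : ℤ → ℤ → Prop)
    (Hpos1 : ∀ p : ℤ × (ℤ → G), 0 < p.1 → pos p)
    (Hnn : ∀ p : ℤ × (ℤ → G), pos p → 0 ≤ p.1)
    (Hz : ∀ p : ℤ × (ℤ → G), p.1 = 0 →
      (pos p ↔ ∃ j, 1 < p.2 j ∧ ∀ i, side j i → p.2 i = 1))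
    (Hirr : ∀ i : ℤ, ¬ side i i)
    (Hk : ∀ j j' : ℤ, ∃ k : ℤ, k ≠ j ∧ k ≠ j' ∧ ¬ side j k ∧ ¬ side j' k)
    (hdir : ∀ x y : G, ∃ z : G, x ≤ z ∧ y ≤ z)
    (hnc : ∃ x y : G, x * y ≠ y * x)
    (hrdp : RDP1WithOn (zwrS G) (fun p q : ℤ × (ℤ → G) => zwrMul p q) (zwrOne G) (posLE pos)) :
    ∀ a b : G, a ≤ b ∨ b ≤ a := by
  -- every strictly positive pair commutes, unless every g is comparable with 1 anyway;
  -- main step: every g is comparable with 1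
  have key : ∀ g : G, (1 : G) ≤ g ∨ g ≤ 1 := by
    intro g
    by_cases hg1 : g = 1
    · exact Or.inl (le_of_eq hg1.symm)
    have singleS : ∀ (w : G) (k : ℤ), ((0 : ℤ), fun i => if i = k then w else 1) ∈ zwrS G := by
      intro w k
      refine Set.Finite.subset (Set.finite_singleton k) ?_
      intro i hi
      simp only [Function.mem_mulSupport] at hi
      simp only [Set.mem_singleton_iff]
      by_contra hik
      rw [if_neg hik] at hi
      exact hi rfl
    set x : ℤ × (ℤ → G) := ((1 : ℤ), fun i => if i = 0 then g else 1) with hxdef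
    set t : ℤ × (ℤ → G) := ((1 : ℤ), fun _ => (1 : G)) with htdef
    set y : ℤ × (ℤ → G) := ((1 : ℤ), fun i => if i = 1 then g else 1) with hydef
    have hxS : x ∈ zwrS G := by
      refine Set.Finite.subset (Set.finite_singleton 0) ?_
      intro i hi
      simp only [hxdef, Function.mem_mulSupport] at hi
      simp only [Set.mem_singleton_iff]
      by_contra hik
      rw [if_neg hik] at hi
      exact hi rfl
    have htS : t ∈ zwrS G := by
      refine Set.Finite.subset (Set.finite_empty) ?_
      intro i hi
      simp [htdef, Function.mem_mulSupport] at hi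
    have hyS : y ∈ zwrS G := by
      refine Set.Finite.subset (Set.finite_singleton 1) ?_
      intro i hi
      simp only [hydef, Function.mem_mulSupport] at hi
      simp only [Set.mem_singleton_iff]
      by_contra hik
      rw [if_neg hik] at hi
      exact hi rfl
    have hx1 : posLE pos (zwrOne G) x :=
      (pos_one_le_iff pos x).mpr (Or.inr (Hpos1 x (by simp [hxdef])))
    have ht1 : posLE pos (zwrOne G) t :=
      (pos_one_le_iff pos t).mpr (Or.inr (Hpos1 t (by simp [htdef])))
    have hy1 : posLE pos (zwrOne G) y :=
      (pos_one_le_iff pos y).mpr (Or.inr (Hpos1 y (by simp [hydef])))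
    have heq : zwrMul x t = zwrMul t y := by
      simp only [hxdef, htdef, hydef, zwrMul]
      refine Prod.ext rfl ?_
      funext i
      simp only [mul_one, one_mul]
      by_cases hi : i = 0
      · rw [if_pos hi, if_pos (by omega : i + 1 = 1)]
      · rw [if_neg hi, if_neg (by omega : ¬ i + 1 = 1)]
    obtain ⟨c11, c12, c21, c22, m11, m12, m21, m22, p11, p12, p21, p22, e1, e2, e3, e4, hcm⟩ :=
      hrdp x t t y hxS htS htS hyS hx1 ht1 ht1 hy1 heq
    have hnn0 : ∀ c : ℤ × (ℤ → G), posLE pos (zwrOne G) c → 0 ≤ c.1 := by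
      intro c hc
      rcases (pos_one_le_iff pos c).mp hc with h | h
      · rw [h]; rfl
      · exact Hnn c h
    obtain ⟨n11, u⟩ := c11
    obtain ⟨n12, f⟩ := c12
    obtain ⟨n21, h⟩ := c21
    obtain ⟨n22, v⟩ := c22
    have g11 := hnn0 _ p11
    have g12 := hnn0 _ p12
    have g21 := hnn0 _ p21
    have g22 := hnn0 _ p22
    simp only at g11 g12 g21 g22
    have f1 : n11 + n12 = 1 := by
      have := congrArg Prod.fst e1
      simpa [hxdef, zwrMul] using this.symm
    have f2 : n21 + n22 = 1 := by
      have := congrArg Prod.fst e2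
      simpa [htdef, zwrMul] using this.symm
    have f3 : n11 + n21 = 1 := by
      have := congrArg Prod.fst e3
      simpa [htdef, zwrMul] using this.symm
    have hcases : (n11 = 1 ∧ n12 = 0 ∧ n21 = 0 ∧ n22 = 1) ∨
        (n11 = 0 ∧ n12 = 1 ∧ n21 = 1 ∧ n22 = 0) := by omega
    rcases hcases with ⟨h11, h12, h21, h22⟩ | ⟨h11, h12, h21, h22⟩
    · -- main case A
      subst h11; subst h12; subst h21; subst h22
      have q1 : ∀ i : ℤ, (if i = 0 then g else 1) = u i * f (i + 1) := by
        intro i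
        have := congrFun (congrArg Prod.snd e1) i
        simpa [hxdef, zwrMul] using this
      have q3 : ∀ i : ℤ, (1 : G) = u i * h (i + 1) := by
        intro i
        have := congrFun (congrArg Prod.snd e3) i
        simpa [htdef, zwrMul] using this
      have q2 : ∀ i : ℤ, (1 : G) = h i * v i := by
        intro i
        have := congrFun (congrArg Prod.snd e2) i
        simpa [htdef, zwrMul] using this
      have q4 : ∀ i : ℤ, (if i = 1 then g else 1) = f i * v i := by
        intro i
        have := congrFun (congrArg Prod.snd e4) i
        simpa [hydef, zwrMul] using this
      have hu : ∀ i : ℤ, u i = (h (i + 1))⁻¹ := fun i =>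
        eq_inv_of_mul_eq_one_left (q3 i).symm
      have hv : ∀ i : ℤ, v i = (h i)⁻¹ := fun i =>
        eq_inv_of_mul_eq_one_right (q2 i).symm
      have hL : ∀ j : ℤ, (h j)⁻¹ * f j = if j = 1 then g else 1 := by
        intro j
        have h1 := q1 (j - 1)
        rw [hu (j - 1), (by omega : j - 1 + 1 = j)] at h1
        rw [← h1]
        by_cases hj : j = 1
        · rw [if_pos hj, if_pos (by omega : j - 1 = 0)]
        · rw [if_neg hj, if_neg (by omega : ¬ j - 1 = 0)]
      have hR : ∀ j : ℤ, f j * (h j)⁻¹ = if j = 1 then g else 1 := by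
        intro j
        rw [← hv j]
        exact (q4 j).symm
      rcases (pos_one_le_iff pos _).mp p12 with hf1 | hfpos
      · -- c12 = 1
        have hf : f = fun _ => (1 : G) := by
          have := congrArg Prod.snd hf1
          simpa [zwrOne] using this
        have hh1g : (h 1)⁻¹ = g := by
          have := hL 1
          rw [hf] at this
          simpa using this
        rcases (pos_one_le_iff pos _).mp p21 with hhone | hhpos
        · have hh : h = fun _ => (1 : G) := by
            have := congrArg Prod.snd hhone
            simpa [zwrOne] using this
          rw [hh] at hh1g
          simp at hh1g
          exact absurd hh1g.symm hg1
        · obtain ⟨j0, hj0, htail⟩ := (Hz _ rfl).mp hhpos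
          simp only at hj0 htail
          have hj01 : j0 = 1 := by
            by_contra hj01
            have := hL j0
            rw [if_neg hj01, hf] at this
            simp only at this
            rw [mul_one] at this
            rw [inv_eq_one.mp this] at hj0
            exact lt_irrefl 1 hj0
          rw [hj01] at hj0
          right
          have := mul_lt_mul_right hj0 (h 1)⁻¹
          rw [mul_one] at this
          rw [inv_mul_cancel] at this
          rw [hh1g] at this
          exact le_of_lt this
      · -- c12 strictly positive
        obtain ⟨jf, hjf, tf⟩ := (Hz _ rfl).mp hfpos
        simp only at hjf tf
        rcases (pos_one_le_iff pos _).mp p21 with hhone | hhpos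
        · -- c21 = 1
          have hh : h = fun _ => (1 : G) := by
            have := congrArg Prod.snd hhone
            simpa [zwrOne] using this
          have hfg : f 1 = g := by
            have := hL 1
            rw [hh] at this
            simpa using this
          have hjf1 : jf = 1 := by
            by_contra hj01
            have := hL jf
            rw [if_neg hj01, hh] at this
            simp only at this
            rw [inv_one, one_mul] at this
            rw [this] at hjf
            exact lt_irrefl 1 hjf
          rw [hjf1, hfg] at hjf
          exact Or.inl (le_of_lt hjf)
        · -- both strictly positive : contradiction with non-commutativity
          obtain ⟨jh, hjh, th⟩ := (Hz _ rfl).mp hhpos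
          simp only at hjh th
          obtain ⟨k, hk1, hk2, hk3, hk4⟩ := Hk jf jh
          have hcomm : ∀ w w' : G, 1 < w → 1 < w' → w * w' = w' * w := by
            intro w w' hw hw'
            have hsw1 : ∀ (w0 : G), 1 < w0 →
                posLE pos (zwrOne G) ((0 : ℤ), fun i => if i = k then w0 else 1) := by
              intro w0 hw0
              refine (pos_one_le_iff pos _).mpr (Or.inr ((Hz _ rfl).mpr ?_))
              refine ⟨k, by simpa using hw0, ?_⟩
              intro i hi
              have hik : i ≠ k := by
                intro hik
                rw [hik] at hi
                exact Hirr k hi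
              simp [hik]
            have hswf : ∀ (w0 : G), 1 < w0 →
                posLE pos ((0 : ℤ), fun i => if i = k then w0 else 1) ((0 : ℤ), f) := by
              intro w0 hw0
              refine Or.inr ((Hz _ (by simp [zwrMul, zwrInv])).mpr ?_)
              have hvali : ∀ i : ℤ,
                  (zwrMul (zwrInv ((0 : ℤ), fun i => if i = k then w0 else 1)) ((0 : ℤ), f)).2 i
                    = (if i = k then w0 else 1)⁻¹ * f i := by
                intro i
                simp [zwrMul, zwrInv]
              refine ⟨jf, ?_, ?_⟩
              · rw [hvali, if_neg (Ne.symm hk1), inv_one, one_mul]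
                exact hjf
              · intro i hi
                have hik : i ≠ k := by
                  intro hik
                  rw [hik] at hi
                  exact hk3 hi
                rw [hvali, if_neg hik, inv_one, one_mul]
                exact tf i hi
            have hswh : ∀ (w0 : G), 1 < w0 →
                posLE pos ((0 : ℤ), fun i => if i = k then w0 else 1) ((0 : ℤ), h) := by
              intro w0 hw0
              refine Or.inr ((Hz _ (by simp [zwrMul, zwrInv])).mpr ?_)
              have hvali : ∀ i : ℤ,
                  (zwrMul (zwrInv ((0 : ℤ), fun i => if i = k then w0 else 1)) ((0 : ℤ), h)).2 i
                    = (if i = k then w0 else 1)⁻¹ * h i := by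
                intro i
                simp [zwrMul, zwrInv]
              refine ⟨jh, ?_, ?_⟩
              · rw [hvali, if_neg (Ne.symm hk2), inv_one, one_mul]
                exact hjh
              · intro i hi
                have hik : i ≠ k := by
                  intro hik
                  rw [hik] at hi
                  exact hk4 hi
                rw [hvali, if_neg hik, inv_one, one_mul]
                exact th i hi
            have := hcm ((0 : ℤ), fun i => if i = k then w else 1)
              ((0 : ℤ), fun i => if i = k then w' else 1)
              (singleS w k) (singleS w' k) (hsw1 w hw) (hswf w hw) (hsw1 w' hw') (hswh w' hw')
            have h2 := congrFun (congrArg Prod.snd this) k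
            simpa [zwrMul] using h2
          -- positive elements commute, hence G is abelian: contradiction
          exfalso
          have hcomm' : ∀ a b : G, 1 ≤ a → 1 ≤ b → Commute a b := by
            intro a b ha hb
            rcases eq_or_lt_of_le ha with ha' | ha'
            · rw [← ha']; exact Commute.one_left b
            rcases eq_or_lt_of_le hb with hb' | hb'
            · rw [← hb']; exact Commute.one_right a
            exact hcomm a b ha' hb'
          obtain ⟨x0, y0, hxy⟩ := hnc
          obtain ⟨z, hxz, h1z⟩ := hdir x0 1
          obtain ⟨z', hyz, h1z'⟩ := hdir y0 1
          have h1b : (1 : G) ≤ x0⁻¹ * z := by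
            have := mul_le_mul_right hxz x0⁻¹
            rwa [inv_mul_cancel] at this
          have h1d : (1 : G) ≤ y0⁻¹ * z' := by
            have := mul_le_mul_right hyz y0⁻¹
            rwa [inv_mul_cancel] at this
          have hx0 : x0 = z * (x0⁻¹ * z)⁻¹ := by group
          have hy0 : y0 = z' * (y0⁻¹ * z')⁻¹ := by group
          apply hxy
          rw [hx0, hy0]
          exact ((hcomm' z z' h1z h1z').mul_right
              ((hcomm' z _ h1z h1d).inv_right)).mul_left
            (((hcomm' _ z' h1b h1z').mul_right ((hcomm' _ _ h1b h1d).inv_right)).inv_left)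
    · -- degenerate case B : forces g = 1
      subst h11; subst h12; subst h21; subst h22
      exfalso
      apply hg1
      have q1 : ∀ i : ℤ, (if i = 0 then g else 1) = u i * f i := by
        intro i
        have := congrFun (congrArg Prod.snd e1) i
        simpa [hxdef, zwrMul] using this
      have q3 : ∀ i : ℤ, (1 : G) = u i * h i := by
        intro i
        have := congrFun (congrArg Prod.snd e3) i
        simpa [htdef, zwrMul] using this
      have q2 : ∀ i : ℤ, (1 : G) = h i * v (i + 1) := by
        intro i
        have := congrFun (congrArg Prod.snd e2) i
        simpa [htdef, zwrMul] using this
      have q4 : ∀ i : ℤ, (if i = 1 then g else 1) = f i * v (i + 1) := by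
        intro i
        have := congrFun (congrArg Prod.snd e4) i
        simpa [hydef, zwrMul] using this
      have e0 : (1 : G) = f 0 * v 1 := by simpa using (q4 0)
      have e0' : (1 : G) = h 0 * v 1 := by simpa using (q2 0)
      have hfh : f 0 = h 0 := mul_right_cancel (e0.symm.trans e0')
      have hh0 : h 0 = (u 0)⁻¹ := eq_inv_of_mul_eq_one_right (q3 0).symm
      have := q1 0
      rw [if_pos rfl, hfh, hh0, mul_inv_cancel] at this
      exact this
  intro a b
  rcases key (a⁻¹ * b) with h | h
  · left
    have := mul_le_mul_right h a
    rwa [mul_one, mul_inv_cancel_left] at this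
  · right
    have := mul_le_mul_right h a
    rwa [mul_one, mul_inv_cancel_left] at this

end PosLin

section Instances

variable {G : Type*} [Group G] [PartialOrder G]
  [CovariantClass G G (· * ·) (· ≤ ·)]

set_option linter.unusedSectionVars false

theorem rPos_hpos1 : ∀ p : ℤ × (ℤ → G), 0 < p.1 → rPos p := fun _ h => Or.inl h

theorem lPos_hpos1 : ∀ p : ℤ × (ℤ → G), 0 < p.1 → lPos p := fun _ h => Or.inl h

theorem rPos_hnn : ∀ p : ℤ × (ℤ → G), rPos p → 0 ≤ p.1 := by
  rintro p (h | ⟨h, _⟩) <;> omega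

theorem lPos_hnn : ∀ p : ℤ × (ℤ → G), lPos p → 0 ≤ p.1 := by
  rintro p (h | ⟨h, _⟩) <;> omega

theorem rPos_hz : ∀ p : ℤ × (ℤ → G), p.1 = 0 →
    (rPos p ↔ ∃ j, 1 < p.2 j ∧ ∀ i, j < i → p.2 i = 1) := by
  intro p hp
  simp [rPos, hp]

theorem lPos_hz : ∀ p : ℤ × (ℤ → G), p.1 = 0 →
    (lPos p ↔ ∃ j, 1 < p.2 j ∧ ∀ i, i < j → p.2 i = 1) := by
  intro p hp
  simp [lPos, hp]

theorem rPos_hext : ∀ S : Set ℤ, S.Finite → S.Nonempty →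
    ∃ j ∈ S, ∀ i : ℤ, j < i → i ∉ S := by
  intro S hfin hne
  have hne' : hfin.toFinset.Nonempty := by
    rwa [Set.Finite.toFinset_nonempty]
  refine ⟨hfin.toFinset.max' hne', by
    have := hfin.toFinset.max'_mem hne'
    rwa [Set.Finite.mem_toFinset] at this, ?_⟩
  intro i hi hiS
  have := hfin.toFinset.le_max' i (by rwa [Set.Finite.mem_toFinset])
  omega

theorem lPos_hext : ∀ S : Set ℤ, S.Finite → S.Nonempty →
    ∃ j ∈ S, ∀ i : ℤ, i < j → i ∉ S := by
  intro S hfin hne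
  have hne' : hfin.toFinset.Nonempty := by
    rwa [Set.Finite.toFinset_nonempty]
  refine ⟨hfin.toFinset.min' hne', by
    have := hfin.toFinset.min'_mem hne'
    rwa [Set.Finite.mem_toFinset] at this, ?_⟩
  intro i hi hiS
  have := hfin.toFinset.min'_le i (by rwa [Set.Finite.mem_toFinset])
  omega

theorem rPos_hirr : ∀ i : ℤ, ¬ (i < i) := fun i => lt_irrefl i

theorem rPos_hk : ∀ j j' : ℤ, ∃ k : ℤ, k ≠ j ∧ k ≠ j' ∧ ¬ (j < k) ∧ ¬ (j' < k) :=
  fun j j' => ⟨min j j' - 1, by omega, by omega, by omega, by omega⟩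

theorem lPos_hk : ∀ j j' : ℤ, ∃ k : ℤ, k ≠ j ∧ k ≠ j' ∧ ¬ (k < j) ∧ ¬ (k < j') :=
  fun j j' => ⟨max j j' + 1, by omega, by omega, by omega, by omega⟩

theorem rPos_hasym : ∀ p : ℤ × (ℤ → G), rPos p → rPos (zwrInv p) → False := by
  rintro ⟨n, f⟩ h1 h2
  simp only [zwrInv, rPos] at h1 h2
  rcases h1 with hn | ⟨hn, j, hj, hj'⟩
  · rcases h2 with hn' | ⟨hn', _⟩ <;> omega
  · rcases h2 with hn' | ⟨_, j', hj2, hj2'⟩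
    · omega
    subst hn
    simp only [sub_zero] at hj2 hj2'
    rcases lt_trichotomy j j' with hlt | heq | hgt
    · rw [hj' j' hlt, inv_one] at hj2
      exact lt_irrefl 1 hj2
    · subst heq
      have := mul_lt_mul_right hj2 (f j)
      rw [mul_one, mul_inv_cancel] at this
      exact lt_irrefl _ (hj.trans this)
    · have := hj2' j hgt
      rw [inv_eq_one.mp this] at hj
      exact lt_irrefl 1 hj

theorem lPos_hasym : ∀ p : ℤ × (ℤ → G), lPos p → lPos (zwrInv p) → False := by
  rintro ⟨n, f⟩ h1 h2
  simp only [zwrInv, lPos] at h1 h2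
  rcases h1 with hn | ⟨hn, j, hj, hj'⟩
  · rcases h2 with hn' | ⟨hn', _⟩ <;> omega
  · rcases h2 with hn' | ⟨_, j', hj2, hj2'⟩
    · omega
    subst hn
    simp only [sub_zero] at hj2 hj2'
    rcases lt_trichotomy j j' with hlt | heq | hgt
    · have := hj2' j hlt
      rw [inv_eq_one.mp this] at hj
      exact lt_irrefl 1 hj
    · subst heq
      have := mul_lt_mul_right hj2 (f j)
      rw [mul_one, mul_inv_cancel] at this
      exact lt_irrefl _ (hj.trans this)
    · rw [hj' j' hgt, inv_one] at hj2
      exact lt_irrefl 1 hj2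

end Instances

/-- For a non-commutative directed po-group `G`, the right
wreath product `ℤ →wr G` satisfies RDP₁ iff the left wreath product `ℤ ←wr G`
satisfies RDP₁ iff `G` is linearly ordered; and in any such case both wreath
products are linearly ordered groups. -/
theorem zwr_rdp1_iff_linearOrdered {G : Type*} [Group G] [PartialOrder G]
    [CovariantClass G G (· * ·) (· ≤ ·)]
    [CovariantClass G G (Function.swap (· * ·)) (· ≤ ·)]
    (hdir : ∀ x y : G, ∃ z : G, x ≤ z ∧ y ≤ z)
    (hnc : ∃ x y : G, x * y ≠ y * x) :
    (RDP1WithOn (zwrS G) (fun p q : ℤ × (ℤ → G) => zwrMul p q) (zwrOne G) rLE ↔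
      ∀ a b : G, a ≤ b ∨ b ≤ a) ∧
    (RDP1WithOn (zwrS G) (fun p q : ℤ × (ℤ → G) => zwrMul p q) (zwrOne G) lLE ↔
      ∀ a b : G, a ≤ b ∨ b ≤ a) ∧
    ((∀ a b : G, a ≤ b ∨ b ≤ a) →
      (∀ p ∈ zwrS G, ∀ q ∈ zwrS G, rLE p q ∨ rLE q p) ∧
      (∀ p ∈ zwrS G, ∀ q ∈ zwrS G, lLE p q ∨ lLE q p)) := by
  refine ⟨⟨fun hr => ?_, fun hlin => ?_⟩, ⟨fun hl => ?_, fun hlin => ?_⟩,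
    fun hlin => ⟨?_, ?_⟩⟩
  · exact pos_lin_of_rdp1 rPos (· < ·) rPos_hpos1 rPos_hnn rPos_hz rPos_hirr rPos_hk hdir hnc hr
  · exact pos_rdp1_of_lin rPos (· < ·) rPos_hpos1 rPos_hasym rPos_hz rPos_hext hlin
  · exact pos_lin_of_rdp1 lPos (fun j i => i < j) lPos_hpos1 lPos_hnn lPos_hz rPos_hirr lPos_hk
      hdir hnc hl
  · exact pos_rdp1_of_lin lPos (fun j i => i < j) lPos_hpos1 lPos_hasym lPos_hz lPos_hext hlin
  · exact pos_le_total rPos (· < ·) rPos_hpos1 rPos_hz rPos_hext hlin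
  · exact pos_le_total lPos (fun j i => i < j) lPos_hpos1 lPos_hz lPos_hext hlin
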